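/- For each nonnegative integer k, the restriction of the quaternionic exponential to the open set 𝒰_k = {q ∈ ℍ : kπ < |q_v| < (k+1)π} is injective, with image contained in ℍ \ ℝ. -/

import Mathlib

lemma aux_sin_ne_zero (k : ℕ) {x : ℝ} (h1 : k * Real.pi < x) (h2 : x < (k + 1) * Real.pi) :
    Real.sin x ≠ 0 := by
  intro h
  obtain ⟨n, hn⟩ := Real.sin_eq_zero_iff.1 h
  rw [← hn] at h1 h2
  have hk : (k : ℝ) < n := lt_of_mul_lt_mul_right (by linarith) Real.pi_pos.le
  have hk2 : (n : ℝ) < k + 1 := lt_of_mul_lt_mul_right (by linarith) Real.pi_pos.le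
  have h1' : (k : ℤ) < n := by exact_mod_cast hk
  have h2' : (n : ℤ) < k + 1 := by exact_mod_cast hk2
  omega

lemma aux_cos_inj (k : ℕ) {x y : ℝ}
    (hx1 : k * Real.pi < x) (hx2 : x < (k + 1) * Real.pi)
    (hy1 : k * Real.pi < y) (hy2 : y < (k + 1) * Real.pi)
    (h : Real.cos x = Real.cos y) : x = y := by
  have hx : x = (x - k * Real.pi) + k * Real.pi := by ring
  have hy : y = (y - k * Real.pi) + k * Real.pi := by ring
  rw [hx, hy, Real.cos_add_nat_mul_pi, Real.cos_add_nat_mul_pi] at h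
  have hne : ((-1 : ℝ)) ^ k ≠ 0 := pow_ne_zero _ (by norm_num)
  have h' : Real.cos (x - k * Real.pi) = Real.cos (y - k * Real.pi) :=
    mul_left_cancel₀ hne h
  have := Real.injOn_cos (Set.mem_Icc.2 ⟨by linarith, by linarith⟩)
    (Set.mem_Icc.2 ⟨by linarith, by linarith⟩) h'
  linarith

theorem exp_injOn_Uk (k : ℕ) :
    (∀ p q : Quaternion ℝ,
        (k * Real.pi < ‖p.im‖ ∧ ‖p.im‖ < (k + 1) * Real.pi) →
        (k * Real.pi < ‖q.im‖ ∧ ‖q.im‖ < (k + 1) * Real.pi) →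
        NormedSpace.exp p = NormedSpace.exp q → p = q) ∧
      ∀ q : Quaternion ℝ, (k * Real.pi < ‖q.im‖ ∧ ‖q.im‖ < (k + 1) * Real.pi) →
        (NormedSpace.exp q).im ≠ 0 := by
  have himpos : ∀ q : Quaternion ℝ, k * Real.pi < ‖q.im‖ → 0 < ‖q.im‖ := fun q h =>
    lt_of_le_of_lt (by positivity) h
  have hcoef : ∀ q : Quaternion ℝ,
      (k * Real.pi < ‖q.im‖ ∧ ‖q.im‖ < (k + 1) * Real.pi) →
      (NormedSpace.exp q).im =
        (Real.exp q.re * (Real.sin ‖q.im‖ / ‖q.im‖)) • q.im ∧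
        Real.exp q.re * (Real.sin ‖q.im‖ / ‖q.im‖) ≠ 0 := by
    intro q hq
    have hs := aux_sin_ne_zero k hq.1 hq.2
    have hpos := himpos q hq.1
    refine ⟨by rw [Quaternion.im_exp, ← Real.exp_eq_exp_ℝ], ?_⟩
    exact mul_ne_zero (Real.exp_ne_zero _) (div_ne_zero hs hpos.ne')
  constructor
  · intro p q hp hq hexp
    have hre : p.re = q.re := by
      have hn := congrArg (‖·‖) hexp
      simp only [Quaternion.norm_exp, ← Real.exp_eq_exp_ℝ, Real.norm_eq_abs,
        abs_of_pos (Real.exp_pos _)] at hn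
      exact Real.exp_injective hn
    have hnorm : ‖p.im‖ = ‖q.im‖ := by
      have hr := congrArg QuaternionAlgebra.re hexp
      rw [Quaternion.re_exp, Quaternion.re_exp, Quaternion.sub_re_self,
        Quaternion.sub_re_self, ← Real.exp_eq_exp_ℝ, hre] at hr
      exact aux_cos_inj k hp.1 hp.2 hq.1 hq.2
        (mul_left_cancel₀ (Real.exp_ne_zero _) hr)
    have him : p.im = q.im := by
      have hi := congrArg Quaternion.im hexp
      obtain ⟨hp1, hp2⟩ := hcoef p hp
      obtain ⟨hq1, hq2⟩ := hcoef q hq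
      rw [hp1, hq1, hre, hnorm] at hi
      exact smul_right_injective _ hq2 hi
    have := congrArg₂ (· + ·) (congrArg (Quaternion.coe : ℝ → Quaternion ℝ) hre) him
    simpa [Quaternion.re_add_im] using this
  · intro q hq
    obtain ⟨h1, h2⟩ := hcoef q hq
    rw [h1]
    exact smul_ne_zero h2 (norm_pos_iff.1 (himpos q hq.1))
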